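/- Under unconfoundedness, outcome-independent missingness, and positivity of P(R=1_p | A=a, X) for a = 0,1, the marginal density of X is identified by f(X) = Σ_{a=0}^{1} f(A=a, X, R=1_p) / P(R=1_p | A=a, X), and consequently the average treatment effect satisfies τ = Σ_{a=0}^{1} ∫ τ(X) · f(A=a, X, R=1_p) / P(R=1_p | A=a, X) dν(X). -/

import Mathlib

open MeasureTheory ProbabilityTheory
open scoped ENNReal

lemma aux_ae_nonneg {𝒳 : Type*} [MeasurableSpace 𝒳] {ν : Measure 𝒳} [SigmaFinite ν]
    {f : 𝒳 → ℝ} (hf : Measurable f)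
    (h : ∀ s : Set 𝒳, MeasurableSet s → 0 ≤ ∫ x in s, f x ∂ν) :
    0 ≤ᵐ[ν] f := by
  set t : ℕ → Set 𝒳 := fun n =>
    (f ⁻¹' Set.Icc (-(n + 1 : ℝ)) (-(1 / (n + 1)))) ∩ spanningSets ν n with ht_def
  have htm : ∀ n, MeasurableSet (t n) :=
    fun n => (hf measurableSet_Icc).inter (measurableSet_spanningSets ν n)
  have htfin : ∀ n, ν (t n) < ∞ := fun n =>
    lt_of_le_of_lt (measure_mono Set.inter_subset_right) (measure_spanningSets_lt_top ν n)
  have ht0 : ∀ n, ν (t n) = 0 := by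
    intro n
    have hp : (0:ℝ) < 1 / (n + 1) := by positivity
    have hint : IntegrableOn f (t n) ν := by
      apply Measure.integrableOn_of_bounded (htfin n).ne hf.aestronglyMeasurable (M := n + 1)
      filter_upwards [ae_restrict_mem (htm n)] with x hx
      rw [Real.norm_eq_abs, abs_le]
      exact ⟨hx.1.1, by have := hx.1.2; linarith⟩
    have h1 : ∫ x in t n, f x ∂ν ≤ ∫ _x in t n, (-(1 / (n + 1 : ℝ))) ∂ν := by
      refine setIntegral_mono_on hint (integrableOn_const (htfin n).ne) (htm n) ?_
      exact fun x hx => hx.1.2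
    rw [setIntegral_const, smul_eq_mul] at h1
    have h2 := h (t n) (htm n)
    have h4 : (ν (t n)).toReal = 0 := by
      change _ ≤ (ν (t n)).toReal * _ at h1
      nlinarith [ENNReal.toReal_nonneg (a := ν (t n))]
    exact ((ENNReal.toReal_eq_zero_iff _).1 h4).resolve_right (htfin n).ne
  have hcover : {x | f x < 0} ⊆ ⋃ n, t n := by
    intro x hx
    have hx' : (0:ℝ) < -f x := by simpa using hx
    obtain ⟨n₁, hn₁⟩ := exists_nat_one_div_lt hx'
    obtain ⟨n₂, hn₂⟩ := exists_nat_ge (-f x)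
    have hx3 : x ∈ ⋃ n, spanningSets ν n := by rw [iUnion_spanningSets]; trivial
    obtain ⟨n₃, hn₃⟩ := Set.mem_iUnion.1 hx3
    refine Set.mem_iUnion.2 ⟨n₁ ⊔ n₂ ⊔ n₃, ⟨⟨?_, ?_⟩, ?_⟩⟩
    · have hle : (n₂ : ℝ) ≤ (n₁ ⊔ n₂ ⊔ n₃ : ℕ) := by
        exact_mod_cast le_sup_of_le_left (le_sup_right)
      linarith
    · have hle : (n₁ : ℝ) + 1 ≤ (n₁ ⊔ n₂ ⊔ n₃ : ℕ) + 1 := by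
        have : (n₁:ℝ) ≤ (n₁ ⊔ n₂ ⊔ n₃ : ℕ) := by
          exact_mod_cast le_sup_of_le_left (le_sup_left)
        linarith
      have := one_div_le_one_div_of_le (by positivity : (0:ℝ) < (n₁:ℝ) + 1) hle
      linarith
    · exact monotone_spanningSets ν (le_sup_right) hn₃
  have hnull : ν {x | f x < 0} = 0 :=
    measure_mono_null hcover (measure_iUnion_null ht0)
  rw [Filter.EventuallyLE, ae_iff]
  convert hnull using 2
  ext x
  simp [not_le]

lemma aux_density {𝒳 : Type*} [MeasurableSpace 𝒳] {ν : Measure 𝒳} [SigmaFinite ν]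
    (κ : Measure 𝒳) [IsFiniteMeasure κ] {f : 𝒳 → ℝ} (hf : Measurable f)
    (h : ∀ s : Set 𝒳, MeasurableSet s → ∫ x in s, f x ∂ν = (κ s).toReal) :
    0 ≤ᵐ[ν] f ∧ Integrable f ν ∧
      ν.withDensity (fun x => ENNReal.ofReal (f x)) = κ := by
  have h0 : 0 ≤ᵐ[ν] f :=
    aux_ae_nonneg hf (fun s hs => (h s hs).symm ▸ ENNReal.toReal_nonneg)
  set t : ℕ → Set 𝒳 := fun n => {x | |f x| ≤ n} ∩ spanningSets ν n with ht_def
  have htm : ∀ n, MeasurableSet (t n) := fun n =>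
    (measurableSet_le hf.abs measurable_const).inter (measurableSet_spanningSets ν n)
  have htfin : ∀ n, ν (t n) < ∞ := fun n =>
    lt_of_le_of_lt (measure_mono Set.inter_subset_right) (measure_spanningSets_lt_top ν n)
  have hint : ∀ n, IntegrableOn f (t n) ν := by
    intro n
    apply Measure.integrableOn_of_bounded (htfin n).ne hf.aestronglyMeasurable (M := n)
    filter_upwards [ae_restrict_mem (htm n)] with x hx
    exact hx.1
  have hmono : Monotone t := by
    intro a b hab
    refine Set.inter_subset_inter (fun x hx => ?_) (monotone_spanningSets ν hab)
    simp only [Set.mem_setOf_eq] at hx ⊢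
    exact le_trans hx (by exact_mod_cast hab)
  have hunion : ⋃ n, t n = Set.univ := by
    rw [Set.eq_univ_iff_forall]
    intro x
    obtain ⟨n₁, hn₁⟩ := exists_nat_ge |f x|
    have hx3 : x ∈ ⋃ n, spanningSets ν n := by rw [iUnion_spanningSets]; trivial
    obtain ⟨n₃, hn₃⟩ := Set.mem_iUnion.1 hx3
    refine Set.mem_iUnion.2 ⟨n₁ ⊔ n₃, ⟨?_, monotone_spanningSets ν le_sup_right hn₃⟩⟩
    exact le_trans hn₁ (by exact_mod_cast le_sup_left)
  have key : ∀ n, (ν.withDensity (fun x => ENNReal.ofReal (f x))) (t n) ≤ κ Set.univ := by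
    intro n
    rw [withDensity_apply _ (htm n),
      ← ofReal_integral_eq_lintegral_ofReal (hint n) (ae_restrict_of_ae h0),
      h (t n) (htm n), ENNReal.ofReal_toReal (measure_ne_top κ _)]
    exact measure_mono (Set.subset_univ _)
  have hfin : (ν.withDensity (fun x => ENNReal.ofReal (f x))) Set.univ ≤ κ Set.univ := by
    have he : (ν.withDensity (fun x => ENNReal.ofReal (f x))) Set.univ =
        ⨆ n, (ν.withDensity (fun x => ENNReal.ofReal (f x))) (t n) := by
      rw [← hunion, (hmono.directed_le).measure_iUnion]
    rw [he]
    exact iSup_le key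
  have hlt : ∫⁻ x, ENNReal.ofReal (f x) ∂ν < ∞ := by
    have := lt_of_le_of_lt hfin (measure_lt_top κ _)
    rwa [withDensity_apply _ MeasurableSet.univ, Measure.restrict_univ] at this
  have hfi : Integrable f ν := by
    refine ⟨hf.aestronglyMeasurable, ?_⟩
    rw [hasFiniteIntegral_iff_norm]
    have he : ∫⁻ x, ENNReal.ofReal ‖f x‖ ∂ν = ∫⁻ x, ENNReal.ofReal (f x) ∂ν := by
      refine lintegral_congr_ae ?_
      filter_upwards [h0] with x hx
      rw [Real.norm_of_nonneg hx]
    rwa [he]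
  refine ⟨h0, hfi, ?_⟩
  ext s hs
  rw [withDensity_apply _ hs,
    ← ofReal_integral_eq_lintegral_ofReal hfi.integrableOn (ae_restrict_of_ae h0),
    h s hs, ENNReal.ofReal_toReal (measure_ne_top κ s)]


/-- Theorem 3: under unconfoundedness, outcome-independent missingness,
and positivity of `P(R=1_p | A=a, X)`, the marginal density of `X` is identified by
`f(X) = Σ_a f(A=a, X, R=1_p) / P(R=1_p | A=a, X)`, and consequently
`τ = Σ_a ∫ τ(X) f(A=a, X, R=1_p) / P(R=1_p | A=a, X) dν(X)`. -/
theorem ate_identification_formula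
    {Ω 𝒳 ℛ : Type*} [MeasurableSpace Ω] [StandardBorelSpace Ω]
    [MeasurableSpace 𝒳] [MeasurableSpace ℛ] [MeasurableSingletonClass ℛ]
    (μ : Measure Ω) [IsProbabilityMeasure μ]
    (ν : Measure 𝒳) [SigmaFinite ν]
    (A : Ω → Bool) (X : Ω → 𝒳) (R : Ω → ℛ) (Y0 Y1 : Ω → ℝ)
    (hA : Measurable A) (hX : Measurable X) (hR : Measurable R)
    (hY0 : Measurable Y0) (hY1 : Measurable Y1)
    (hint0 : Integrable Y0 μ) (hint1 : Integrable Y1 μ)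
    (Y : Ω → ℝ) (hY : Y = fun ω => if A ω then Y1 ω else Y0 ω)
    (full : ℛ)
    -- unconfoundedness: (Y(0), Y(1)) ⊥ A | X
    (hunconf : CondIndepFun (MeasurableSpace.comap X inferInstance) hX.comap_le
      (fun ω => (Y0 ω, Y1 ω)) A μ)
    -- outcome-independent missingness: R ⊥ Y | (A, X)
    (hOIM : CondIndepFun
      (MeasurableSpace.comap (fun ω => (A ω, X ω)) inferInstance)
      (Measurable.comap_le (hA.prodMk hX)) R Y μ)
    -- qd a = f(A=a, X, R=1_p): sub-density of X on the event {A=a, R=1_p}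
    (qd : Bool → 𝒳 → ℝ) (hqdm : ∀ a, Measurable (qd a))
    (hqd : ∀ a : Bool, ∀ s : Set 𝒳, MeasurableSet s →
      (μ {ω | A ω = a ∧ R ω = full ∧ X ω ∈ s}).toReal = ∫ x in s, qd a x ∂ν)
    -- π a is a version of P(R=1_p | A=a, X), bounded away from zero
    (π : Bool → 𝒳 → ℝ) (hπm : ∀ a, Measurable (π a))
    (hπ_ver : ∀ a : Bool, ∀ s : Set 𝒳, MeasurableSet s →
      ∫ ω in {ω | A ω = a ∧ X ω ∈ s}, π a (X ω) ∂μ =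
        (μ {ω | A ω = a ∧ R ω = full ∧ X ω ∈ s}).toReal)
    (c : ℝ) (hc : 0 < c) (hπ_pos : ∀ a : Bool, ∀ᵐ ω ∂μ, c < π a (X ω))
    -- fX: marginal density of X with respect to ν
    (fX : 𝒳 → ℝ) (hfXm : Measurable fX)
    (hfX : ∀ s : Set 𝒳, MeasurableSet s → (μ (X ⁻¹' s)).toReal = ∫ x in s, fX x ∂ν)
    -- τX is a version of E[Y(1) − Y(0) | X]
    (τX : 𝒳 → ℝ) (hτXm : Measurable τX)
    (hτX_int : Integrable (fun ω => τX (X ω)) μ)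
    (hτX_ver : ∀ s : Set 𝒳, MeasurableSet s →
      ∫ ω in X ⁻¹' s, (Y1 ω - Y0 ω) ∂μ = ∫ ω in X ⁻¹' s, τX (X ω) ∂μ) :
    (fX =ᵐ[ν] fun x => qd true x / π true x + qd false x / π false x) ∧
      ∫ ω, (Y1 ω - Y0 ω) ∂μ =
        (∫ x, τX x * (qd true x / π true x) ∂ν) +
          ∫ x, τX x * (qd false x / π false x) ∂ν := by
  classical
  have hXa : ∀ a : Bool, MeasurableSet {ω | A ω = a} :=
    fun a => hA (measurableSet_singleton a)
  have hXar : ∀ a : Bool, MeasurableSet {ω | A ω = a ∧ R ω = full} := by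
    intro a
    have : {ω | A ω = a ∧ R ω = full} = A ⁻¹' {a} ∩ R ⁻¹' {full} := rfl
    rw [this]
    exact (hA (measurableSet_singleton a)).inter (hR (measurableSet_singleton full))
  set m : Bool → Measure 𝒳 := fun a => (μ.restrict {ω | A ω = a}).map X with hm_def
  set κm : Bool → Measure 𝒳 :=
    fun a => (μ.restrict {ω | A ω = a ∧ R ω = full}).map X with hκ_def
  have hmfin : ∀ a, IsFiniteMeasure (m a) := fun a => Measure.isFiniteMeasure_map _ _
  have hκfin : ∀ a, IsFiniteMeasure (κm a) := fun a => Measure.isFiniteMeasure_map _ _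
  have hκapp : ∀ a : Bool, ∀ s : Set 𝒳, MeasurableSet s →
      κm a s = μ {ω | A ω = a ∧ R ω = full ∧ X ω ∈ s} := by
    intro a s hs
    rw [hκ_def]
    rw [Measure.map_apply hX hs, Measure.restrict_apply (hX hs)]
    congr 1
    ext ω
    simp only [Set.mem_inter_iff, Set.mem_preimage, Set.mem_setOf_eq]
    tauto
  have main : ∀ a : Bool,
      (0 ≤ᵐ[ν] qd a) ∧
      m a = ν.withDensity (fun x => ENNReal.ofReal (qd a x / π a x)) ∧
      (∀ᵐ x ∂ν, 0 ≤ qd a x / π a x) := by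
    intro a
    haveI := hmfin a
    haveI := hκfin a
    -- qd a is a density of κm a
    have Hqd := aux_density (ν := ν) (κm a) (hqdm a) (fun s hs => by
      rw [hκapp a s hs]; exact (hqd a s hs).symm)
    -- π a is a density of κm a with respect to m a
    have hπ_int : ∀ s : Set 𝒳, MeasurableSet s →
        ∫ x in s, π a x ∂(m a) = (κm a s).toReal := by
      intro s hs
      rw [hm_def]
      rw [setIntegral_map hs (hπm a).aestronglyMeasurable hX.aemeasurable,
        Measure.restrict_restrict (hX hs)]
      have hset : (X ⁻¹' s) ∩ {ω | A ω = a} = {ω | A ω = a ∧ X ω ∈ s} := by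
        ext ω; simp only [Set.mem_inter_iff, Set.mem_preimage, Set.mem_setOf_eq]; tauto
      rw [hset, hπ_ver a s hs, ← hκapp a s hs]
    have Hπ := aux_density (ν := m a) (κm a) (hπm a) hπ_int
    -- positivity of π a, m a - a.e.
    have hpos : ∀ᵐ x ∂(m a), c < π a x := by
      rw [hm_def]
      rw [ae_map_iff hX.aemeasurable (measurableSet_lt measurable_const (hπm a))]
      exact ae_restrict_of_ae (hπ_pos a)
    -- the bad set N where π a ≤ c
    set N : Set 𝒳 := {x | π a x ≤ c} with hN_def
    have hNm : MeasurableSet N := measurableSet_le (hπm a) measurable_const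
    have hmN : m a N = 0 := by
      have := hpos
      rw [ae_iff] at this
      convert this using 2
      ext x
      simp [hN_def, not_lt]
    have hκN : κm a N = 0 := by
      rw [← Hπ.2.2, withDensity_apply _ hNm, setLIntegral_measure_zero _ _ hmN]
    have hqdN : ∀ᵐ x ∂ν, x ∈ N → qd a x = 0 := by
      have h1 : ν.withDensity (fun x => ENNReal.ofReal (qd a x)) N = 0 := by
        rw [Hqd.2.2]; exact hκN
      rw [withDensity_apply _ hNm] at h1
      have h2 := (setLIntegral_eq_zero_iff hNm (hqdm a).ennreal_ofReal).1 h1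
      filter_upwards [h2, Hqd.1] with x hx hx0 hxN
      have h5 := hx hxN
      rw [ENNReal.ofReal_eq_zero] at h5
      have hx0' : (0:ℝ) ≤ qd a x := hx0
      linarith
    have hae : ∀ᵐ x ∂ν, qd a x = 0 ∨ c < π a x := by
      filter_upwards [hqdN] with x hx
      by_cases hcx : c < π a x
      · exact Or.inr hcx
      · exact Or.inl (hx (not_lt.1 hcx))
    -- m a = κm a with density (π a)⁻¹
    have h1 : (κm a).withDensity (fun x => ENNReal.ofReal (π a x)⁻¹) = m a := by
      rw [← Hπ.2.2, ← withDensity_mul _ (g := fun x => ENNReal.ofReal (π a x)⁻¹) (hπm a).ennreal_ofReal (hπm a).inv.ennreal_ofReal]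
      have hone : ((fun x => ENNReal.ofReal (π a x)) * fun x => ENNReal.ofReal (π a x)⁻¹)
          =ᵐ[m a] (1 : 𝒳 → ℝ≥0∞) := by
        filter_upwards [hpos] with x hx
        have hx0 : 0 < π a x := lt_trans hc hx
        simp only [Pi.mul_apply, Pi.one_apply]
        rw [← ENNReal.ofReal_mul hx0.le, mul_inv_cancel₀ hx0.ne', ENNReal.ofReal_one]
      rw [withDensity_congr_ae hone, withDensity_one]
    have h2 : m a = ν.withDensity (fun x => ENNReal.ofReal (qd a x / π a x)) := by
      rw [← h1, ← Hqd.2.2,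
        ← withDensity_mul _ (g := fun x => ENNReal.ofReal (π a x)⁻¹) (hqdm a).ennreal_ofReal (hπm a).inv.ennreal_ofReal]
      refine withDensity_congr_ae ?_
      filter_upwards [Hqd.1] with x hx
      have hx' : (0:ℝ) ≤ qd a x := hx
      simp only [Pi.mul_apply]
      rw [div_eq_mul_inv, ENNReal.ofReal_mul hx']
    have h3 : ∀ᵐ x ∂ν, 0 ≤ qd a x / π a x := by
      filter_upwards [hae, Hqd.1] with x hx hx0
      rcases hx with hx | hx
      · rw [hx, zero_div]
      · exact div_nonneg hx0 (le_of_lt (lt_trans hc hx))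
    exact ⟨Hqd.1, h2, h3⟩
  -- decomposition of μ and of map X μ
  have hcompl : {ω | A ω = false} = {ω | A ω = true}ᶜ := by
    ext ω; simp
  have hμsplit : μ.restrict {ω | A ω = true} + μ.restrict {ω | A ω = false} = μ := by
    rw [hcompl]
    exact Measure.restrict_add_restrict_compl (hXa true)
  have hsum : Measure.map X μ = m true + m false := by
    rw [hm_def, ← Measure.map_add _ _ hX, hμsplit]
  -- fX is a density of map X μ
  haveI : IsProbabilityMeasure (Measure.map X μ) :=
    Measure.isProbabilityMeasure_map hX.aemeasurable
  have hfXd := aux_density (ν := ν) (Measure.map X μ) hfXm (fun s hs => by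
    rw [Measure.map_apply hX hs]; exact (hfX s hs).symm)
  -- Goal 1
  have hG1 : fX =ᵐ[ν] fun x => qd true x / π true x + qd false x / π false x := by
    have hw : ν.withDensity (fun x => ENNReal.ofReal (fX x)) =
        ν.withDensity (fun x => ENNReal.ofReal (qd true x / π true x) +
          ENNReal.ofReal (qd false x / π false x)) := by
      rw [hfXd.2.2, hsum, (main true).2.1, (main false).2.1,
        ← withDensity_add_left (f := fun x => ENNReal.ofReal (qd true x / π true x)) ((hqdm true).div (hπm true)).ennreal_ofReal]
      rfl
    have hae := (withDensity_eq_iff_of_sigmaFinite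
      hfXm.ennreal_ofReal.aemeasurable
      (((((hqdm true).div (hπm true)).ennreal_ofReal).add
        (((hqdm false).div (hπm false)).ennreal_ofReal)).aemeasurable)).1 hw
    filter_upwards [hae, hfXd.1, (main true).2.2, (main false).2.2] with x h1 h2 h3 h4
    have := congrArg ENNReal.toReal h1
    simp only [Pi.add_apply, Pi.div_apply] at this
    rwa [ENNReal.toReal_ofReal h2, ENNReal.toReal_add ENNReal.ofReal_ne_top
      ENNReal.ofReal_ne_top, ENNReal.toReal_ofReal h3, ENNReal.toReal_ofReal h4] at this
  -- Goal 2
  have e1 : ∫ ω, (Y1 ω - Y0 ω) ∂μ = ∫ ω, τX (X ω) ∂μ := by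
    have := hτX_ver Set.univ MeasurableSet.univ
    simpa using this
  have e2 : ∫ ω, τX (X ω) ∂μ =
      ∫ ω, τX (X ω) ∂(μ.restrict {ω | A ω = true}) +
        ∫ ω, τX (X ω) ∂(μ.restrict {ω | A ω = false}) := by
    rw [← integral_add_measure hτX_int.restrict hτX_int.restrict, hμsplit]
  have e3 : ∀ a : Bool, ∫ ω, τX (X ω) ∂(μ.restrict {ω | A ω = a}) = ∫ x, τX x ∂(m a) :=
    fun a => (integral_map hX.aemeasurable hτXm.aestronglyMeasurable).symm
  have hfinal : ∀ a : Bool, ∫ x, τX x ∂(m a) = ∫ x, τX x * (qd a x / π a x) ∂ν := by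
    intro a
    rw [(main a).2.1]
    have hd : (fun x => ENNReal.ofReal (qd a x / π a x)) =
        fun x => ((qd a x / π a x).toNNReal : ℝ≥0∞) := rfl
    rw [hd, integral_withDensity_eq_integral_smul (f := fun x => (qd a x / π a x).toNNReal) ((hqdm a).div (hπm a)).real_toNNReal τX]
    refine integral_congr_ae ?_
    filter_upwards [(main a).2.2] with x hx
    rw [NNReal.smul_def, smul_eq_mul, Real.coe_toNNReal _ hx, mul_comm]
  refine ⟨hG1, ?_⟩
  rw [e1, e2, e3 true, e3 false, hfinal true, hfinal false]
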